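/- Let $g \geq 1$, $c \geq 2$, and for $i \in [c]$ let $m_i = \frac{1}{i}\sum_{j \mid i} \mu(j) g^{i/j}$. Let $d \geq 1$, $\alpha = \frac{1}{g}\sum_{i=1}^c i m_i$, and $\beta(d) = 2m_2 + \cdots + (c-1)m_{c-1} + dc\, m_c$. Define $W(X,Y) = \prod_{j=0}^{g-1} (1 - X^{\beta(d)+j} Y^{\alpha})^{-1} \in \mathbb{Q}(X,Y)$. Then $W(X^{-1}, Y^{-1}) = (-1)^g X^{g\beta(d) + \binom{g}{2}} Y^{g\alpha} W(X,Y)$. -/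

import Mathlib

/-- the functional equation
`W(X⁻¹,Y⁻¹) = (-1)^g X^{gβ(d)+C(g,2)} Y^{gα} W(X,Y)` for
`W(X,Y) = ∏_{j=0}^{g-1} (1 - X^{β(d)+j} Y^α)⁻¹`, where the `m_i` are given by
Witt's formula, `α = (1/g) ∑_{i=1}^c i m_i` and
`β(d) = 2 m_2 + ⋯ + (c-1) m_{c-1} + d c m_c`. -/
theorem stmt13 (g c d : ℕ) (hg : 1 ≤ g) (hc : 2 ≤ c) (hd : 1 ≤ d)
    (m : ℕ → ℕ)
    (hm : ∀ i, 1 ≤ i →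
      ((i * m i : ℕ) : ℤ) =
        ∑ j ∈ i.divisors, ArithmeticFunction.moebius j * (g : ℤ) ^ (i / j))
    (α : ℕ) (hα : g * α = ∑ i ∈ Finset.Icc 1 c, i * m i)
    (β : ℕ) (hβ : β = (∑ i ∈ Finset.Icc 2 (c - 1), i * m i) + d * c * m c)
    (X Y : ℚ) (hX : X ≠ 0) (hY : Y ≠ 0) :
    (∏ j ∈ Finset.range g, (1 - X⁻¹ ^ (β + j) * Y⁻¹ ^ α)⁻¹) =
      (-1 : ℚ) ^ g * X ^ (g * β + g.choose 2) * Y ^ (g * α) *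
        ∏ j ∈ Finset.range g, (1 - X ^ (β + j) * Y ^ α)⁻¹ := by
  have key : ∀ j ∈ Finset.range g,
      (1 - X⁻¹ ^ (β + j) * Y⁻¹ ^ α)⁻¹
        = (-1 : ℚ) * X ^ (β + j) * Y ^ α * (1 - X ^ (β + j) * Y ^ α)⁻¹ := by
    intro j _
    have ht : X ^ (β + j) * Y ^ α ≠ 0 := by positivity
    by_cases h : (1 - X ^ (β + j) * Y ^ α) = 0
    · have h1 : X ^ (β + j) * Y ^ α = 1 := by linarith [sub_eq_zero.mp h]
      have h2 : X⁻¹ ^ (β + j) * Y⁻¹ ^ α = 1 := by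
        rw [inv_pow, inv_pow, ← mul_inv, h1, inv_one]
      rw [h, h2]
      simp
    · have h' : (1 - X⁻¹ ^ (β + j) * Y⁻¹ ^ α) ≠ 0 := by
        intro h0
        apply h
        have : X⁻¹ ^ (β + j) * Y⁻¹ ^ α = 1 := by linarith [sub_eq_zero.mp h0]
        rw [inv_pow, inv_pow, ← mul_inv, inv_eq_one] at this
        rw [this]; ring
      have e : 1 - X⁻¹ ^ (β + j) * Y⁻¹ ^ α
          = -(X ^ (β + j) * Y ^ α)⁻¹ * (1 - X ^ (β + j) * Y ^ α) := by
        rw [inv_pow, inv_pow, ← mul_inv]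
        field_simp
        ring
      rw [e, mul_inv, inv_neg, inv_inv]
      ring
  rw [Finset.prod_congr rfl key]
  rw [show ∀ f : ℕ → ℚ, (∏ j ∈ Finset.range g,
      ((-1 : ℚ) * X ^ (β + j) * Y ^ α * f j))
      = (∏ j ∈ Finset.range g, ((-1 : ℚ) * X ^ (β + j) * Y ^ α)) *
        ∏ j ∈ Finset.range g, f j from fun f => by
      rw [← Finset.prod_mul_distrib]]
  congr 1
  have hsum : ∑ j ∈ Finset.range g, (β + j) = g * β + g.choose 2 := by
    rw [Finset.sum_add_distrib, Finset.sum_const, Finset.card_range, smul_eq_mul,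
      Finset.sum_range_id, Nat.choose_two_right]
  rw [Finset.prod_mul_distrib, Finset.prod_mul_distrib, Finset.prod_const,
    Finset.prod_const, Finset.prod_pow_eq_pow_sum, Finset.card_range,
    ← pow_mul, hsum, Nat.mul_comm α g]
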